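/- Let X be an injective representation of a quiver Q and suppose every torsion free representation embeds into a torsion free injective representation. Then a morphism ψ: X' → X with X' torsion free is an F_cw-precover of X if and only if every morphism φ: Y → X with Y torsion free AND injective factors through ψ. -/

import Mathlib

open CategoryTheory CategoryTheory.Limits

/-- A torsion theory `(T, F)` for the category of left `R`-modules. -/
structure TorsionTheory (R : Type) [Ring R] : Type 2 where
  T : ModuleCat.{0,0} R → Prop
  F : ModuleCat.{0,0} R → Prop
  hom_zero : ∀ (A B : ModuleCat.{0,0} R), T A → F B → ∀ f : A ⟶ B, f = 0
  mem_torsion : ∀ C : ModuleCat.{0,0} R, (∀ B, F B → ∀ f : C ⟶ B, f = 0) → T C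
  mem_torsionFree : ∀ C : ModuleCat.{0,0} R, (∀ A, T A → ∀ f : A ⟶ C, f = 0) → F C

/-- The category of representations of a quiver (vertex type `V`) by
left `R`-modules, realized as functors from the path category of `V`. -/
abbrev QRep (V : Type) [Quiver.{1} V] (R : Type) [Ring R] := Paths V ⥤ ModuleCat.{0,0} R

/-- Let `X` be an injective representation of a quiver and suppose
every componentwise torsion free representation embeds into one that is
componentwise torsion free and injective. Then a morphism `ψ : X' ⟶ X` with
`X'` componentwise torsion free is an `F_cw`-precover of `X` if and only if
every morphism `φ : Y ⟶ X` with `Y` componentwise torsion free *and injective*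
factors through `ψ`. -/
theorem stmt6 {V : Type} [Quiver.{1} V] {R : Type} [Ring R] (tt : TorsionTheory R)
    (hembed : ∀ Y : QRep V R, (∀ v : V, tt.F (Y.obj ((Paths.of V).obj v))) →
      ∃ (E : QRep V R) (i : Y ⟶ E), Mono i ∧ (∀ v : V, tt.F (E.obj ((Paths.of V).obj v))) ∧
        Injective E)
    (X X' : QRep V R) (hX : Injective X) (ψ : X' ⟶ X)
    (hX' : ∀ v : V, tt.F (X'.obj ((Paths.of V).obj v))) :
    (∀ Y : QRep V R, (∀ v : V, tt.F (Y.obj ((Paths.of V).obj v))) →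
        ∀ φ : Y ⟶ X, ∃ f : Y ⟶ X', f ≫ ψ = φ) ↔
    (∀ Y : QRep V R, (∀ v : V, tt.F (Y.obj ((Paths.of V).obj v))) → Injective Y →
        ∀ φ : Y ⟶ X, ∃ f : Y ⟶ X', f ≫ ψ = φ) := by
  constructor
  · intro h Y hY _ φ
    exact h Y hY φ
  · intro h Y hY φ
    obtain ⟨E, i, hmono, hEF, hEinj⟩ := hembed Y hY
    obtain ⟨g, hg⟩ := hX.factors φ i
    obtain ⟨f, hf⟩ := h E hEF hEinj g
    exact ⟨i ≫ f, by rw [Category.assoc, hf, hg]⟩
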